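/- There is no unitary operator U on H ⊗ H (H a complex Hilbert space of dimension ≥ 2) and fixed state |b⟩ such that U(|ψ⟩ ⊗ |b⟩) = |ψ⟩ ⊗ |ψ⟩ for all unit vectors |ψ⟩ ∈ H (the no-cloning theorem). -/

import Mathlib

/-- The tensor product of two states of an `n`-dimensional system, realized on
`EuclideanSpace ℂ (Fin n × Fin n)`. -/
noncomputable def tensorState (n : ℕ) (ψ φ : EuclideanSpace ℂ (Fin n)) :
    EuclideanSpace ℂ (Fin n × Fin n) :=
  (EuclideanSpace.equiv (Fin n × Fin n) ℂ).symm (fun p => ψ p.1 * φ p.2)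

local notation "⟪" x ", " y "⟫" => @inner ℂ _ _ x y

lemma inner_tensorState (n : ℕ) (ψ φ ψ' φ' : EuclideanSpace ℂ (Fin n)) :
    ⟪tensorState n ψ φ, tensorState n ψ' φ'⟫ = ⟪ψ, ψ'⟫ * ⟪φ, φ'⟫ := by
  simp only [tensorState, PiLp.inner_apply, RCLike.inner_apply, EuclideanSpace.equiv,
    LinearEquiv.coe_symm_mk, map_mul, PiLp.continuousLinearEquiv_symm_apply, WithLp.equiv_symm_apply, PiLp.toLp_apply]
  rw [Fintype.sum_prod_type, Finset.sum_mul_sum]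
  exact Finset.sum_congr rfl fun i _ => Finset.sum_congr rfl fun j _ => by ring

/-- The no-cloning theorem: there is no linear isometry `U` on `H ⊗ H`
(`H` of dimension `n ≥ 2`) and fixed unit state `b` such that
`U (ψ ⊗ b) = ψ ⊗ ψ` for all unit vectors `ψ`. -/
theorem no_cloning (n : ℕ) (hn : 2 ≤ n) :
    ¬ ∃ (U : EuclideanSpace ℂ (Fin n × Fin n) →ₗᵢ[ℂ] EuclideanSpace ℂ (Fin n × Fin n))
        (b : EuclideanSpace ℂ (Fin n)), ‖b‖ = 1 ∧
        ∀ ψ : EuclideanSpace ℂ (Fin n), ‖ψ‖ = 1 →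
          U (tensorState n ψ b) = tensorState n ψ ψ := by
  rintro ⟨U, b, hb, hU⟩
  set i0 : Fin n := ⟨0, by omega⟩ with hi0
  set i1 : Fin n := ⟨1, by omega⟩ with hi1
  have hne : i0 ≠ i1 := by simp [hi0, hi1, Fin.ext_iff]
  set ψ : EuclideanSpace ℂ (Fin n) := EuclideanSpace.single i0 1 with hψdef
  set φ : EuclideanSpace ℂ (Fin n) :=
    ((Real.sqrt 2 : ℂ))⁻¹ • (EuclideanSpace.single i0 1 + EuclideanSpace.single i1 1) with hφdef
  have hs2 : (0:ℝ) < Real.sqrt 2 := by positivity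
  have hψ : ‖ψ‖ = 1 := by simp [hψdef]
  have hφinner : ⟪φ, φ⟫ = 1 := by
    simp only [hφdef, inner_smul_left, inner_smul_right, inner_add_left, inner_add_right,
      EuclideanSpace.inner_single_left, EuclideanSpace.single_apply, hne, hne.symm,
      if_true, if_false, map_one, one_mul, Complex.conj_ofReal, map_inv₀]
    have : ((Real.sqrt 2 : ℂ)) * (Real.sqrt 2 : ℂ) = 2 := by
      rw [← Complex.ofReal_mul, Real.mul_self_sqrt (by norm_num)]
      norm_num
    field_simp
    linear_combination -this
  have hφ : ‖φ‖ = 1 := by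
    rw [@norm_eq_sqrt_re_inner ℂ, hφinner]
    simp
  have hc : ⟪ψ, φ⟫ = ((Real.sqrt 2 : ℂ))⁻¹ := by
    simp [hψdef, hφdef, inner_smul_right, inner_add_right, EuclideanSpace.inner_single_left,
      EuclideanSpace.single_apply, hne, hne.symm]
  have hbb : ⟪b, b⟫ = 1 := by
    rw [inner_self_eq_norm_sq_to_K, hb]; norm_num
  have key := U.inner_map_map (tensorState n ψ b) (tensorState n φ b)
  rw [hU ψ hψ, hU φ hφ, inner_tensorState, inner_tensorState, hbb, mul_one, hc] at key
  have hc0 : ((Real.sqrt 2 : ℂ))⁻¹ ≠ 0 := by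
    simp [Complex.ofReal_ne_zero, hs2.ne']
  have : ((Real.sqrt 2 : ℂ))⁻¹ = 1 := by
    have := mul_right_cancel₀ hc0 (key.trans (one_mul _).symm)
    exact this
  have h1 : (Real.sqrt 2 : ℂ) = 1 := by
    rwa [inv_eq_one] at this
  have h2 : Real.sqrt 2 = 1 := by exact_mod_cast h1
  nlinarith [Real.sq_sqrt (show (0:ℝ) ≤ 2 by norm_num), h2]
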